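/- Let L be an even lattice, λ ∈ L a primitive vector with (λ, λ) = 2d > 0, and write λ = mμ with m a positive integer and μ primitive in the dual lattice L'. Then m divides 2d. Moreover, if k and c are positive integers such that ckμ ∈ L and k²(μ, μ) = 2/c, then k divides 2 and dk divides m; consequently m = d or m = 2d, and if m = d then necessarily k = 1. -/

import Mathlib

/-!
Statement 7: Let `L` be an even lattice, `λ ∈ L` primitive with `(λ,λ) = 2d > 0`, and
write `λ = mμ` with `m` a positive integer and `μ` primitive in the dual lattice `L'`.
Then `m ∣ 2d`.  Moreover if `k, c` are positive integers with `ckμ ∈ L` and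
`k²(μ,μ) = 2/c`, then `k ∣ 2` and `dk ∣ m`; consequently `m = d` or `m = 2d`, and if
`m = d` then necessarily `k = 1`.
-/

namespace RMV

variable {V : Type} [AddCommGroup V] [Module ℚ V]

/-- The dual lattice of `L` with respect to the bilinear form `B`. -/
def dual (B : V →ₗ[ℚ] V →ₗ[ℚ] ℚ) (L : Submodule ℤ V) : Submodule ℤ V where
  carrier := {x : V | ∀ y ∈ L, ∃ k : ℤ, B x y = (k : ℚ)}
  add_mem' := by
    intro a b ha hb y hy
    obtain ⟨k, hk⟩ := ha y hy
    obtain ⟨l, hl⟩ := hb y hy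
    exact ⟨k + l, by rw [map_add, LinearMap.add_apply, hk, hl]; push_cast; ring⟩
  zero_mem' := by
    intro y hy
    exact ⟨0, by rw [map_zero, LinearMap.zero_apply]; norm_num⟩
  smul_mem' := by
    intro c x hx y hy
    obtain ⟨k, hk⟩ := hx y hy
    refine ⟨c * k, ?_⟩
    have hcast : (c : ℤ) • x = ((c : ℚ)) • x := (Int.cast_smul_eq_zsmul ℚ c x).symm
    rw [hcast, map_smul, LinearMap.smul_apply, hk, smul_eq_mul]
    push_cast; ring

/-- `L` is an even lattice (in the ambient rational quadratic space `(V, B)`). -/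
structure IsEvenLattice (B : V →ₗ[ℚ] V →ₗ[ℚ] ℚ) (L : Submodule ℤ V) : Prop where
  symm : ∀ x y : V, B x y = B y x
  nondeg : ∀ x : V, (∀ y : V, B x y = 0) → x = 0
  fg : L.FG
  spans : Submodule.span ℚ (L : Set V) = ⊤
  integral : ∀ x ∈ L, ∀ y ∈ L, ∃ k : ℤ, B x y = (k : ℚ)
  even : ∀ x ∈ L, ∃ k : ℤ, B x x = 2 * (k : ℚ)

/-- `x` is a primitive vector of the lattice `N`: it is not a proper integral
multiple of another vector of `N`. -/
def IsPrimitiveIn (N : Submodule ℤ V) (x : V) : Prop :=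
  x ∈ N ∧ ∀ y ∈ N, ∀ n : ℤ, x = n • y → IsUnit n

theorem primitive_vector_divisibility
    (V : Type) [AddCommGroup V] [Module ℚ V]
    (B : V →ₗ[ℚ] V →ₗ[ℚ] ℚ) (L : Submodule ℤ V)
    (hL : IsEvenLattice B L)
    (lam mu : V) (d m : ℤ) (hd : 0 < d) (hm : 0 < m)
    (hlam : IsPrimitiveIn L lam)
    (hnorm : B lam lam = 2 * (d : ℚ))
    (hlm : lam = m • mu)
    (hmu : IsPrimitiveIn (dual B L) mu) :
    m ∣ 2 * d ∧
    ∀ k c : ℤ, 0 < k → 0 < c →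
      (c * k) • mu ∈ L → (k : ℚ) ^ 2 * B mu mu = 2 / (c : ℚ) →
        (k ∣ 2 ∧ d * k ∣ m ∧ (m = d ∨ m = 2 * d) ∧ (m = d → k = 1)) := by
  have hmQ : (m : ℚ) ≠ 0 := Int.cast_ne_zero.mpr hm.ne'
  have hdQ : (d : ℚ) ≠ 0 := Int.cast_ne_zero.mpr hd.ne'
  -- B μ μ in terms of d and m
  have hBmm : (m : ℚ) ^ 2 * B mu mu = 2 * (d : ℚ) := by
    have h1 : B lam lam = (m : ℚ) ^ 2 * B mu mu := by
      simp only [hlm, map_zsmul, LinearMap.smul_apply, zsmul_eq_mul, smul_eq_mul]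
      push_cast; ring
    rw [h1] at hnorm; exact hnorm
  -- part 1 : m ∣ 2d
  obtain ⟨j, hj⟩ := hmu.1 lam hlam.1
  have hjlam : B mu lam = (m : ℚ) * B mu mu := by
    rw [hlm, map_zsmul, zsmul_eq_mul]
  have hmj : m * j = 2 * d := by
    have : (m : ℚ) * (j : ℚ) = 2 * (d : ℚ) := by
      rw [← hj, hjlam, ← hBmm]; ring
    exact_mod_cast this
  have hmdvd : m ∣ 2 * d := Dvd.intro j hmj
  refine ⟨hmdvd, ?_⟩
  intro k c hk hc hnuL heq
  have hcQ : (c : ℚ) ≠ 0 := Int.cast_ne_zero.mpr hc.ne'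
  -- m² = c k² d
  have h2 : (c : ℚ) * ((k : ℚ) ^ 2 * B mu mu) = 2 := by
    rw [heq]; field_simp
  have hintQ : (m : ℚ) ^ 2 = (c : ℚ) * (k : ℚ) ^ 2 * (d : ℚ) := by
    linear_combination ((c : ℚ) * (k : ℚ) ^ 2 / 2) * hBmm - ((m : ℚ) ^ 2 / 2) * h2
  have hint : m ^ 2 = c * k ^ 2 * d := by exact_mod_cast hintQ
  -- m ∣ c * k via primitivity of λ
  set g : ℤ := (Int.gcd m (c * k) : ℤ) with hg
  have hgdvdm : g ∣ m := Int.gcd_dvd_left m (c * k)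
  have hgdvdck : g ∣ c * k := Int.gcd_dvd_right m (c * k)
  have hgpos : 0 < g := by
    rw [hg]
    exact_mod_cast Int.gcd_pos_of_ne_zero_left (c * k) hm.ne'
  have hbez : g = m * Int.gcdA m (c * k) + (c * k) * Int.gcdB m (c * k) :=
    Int.gcd_eq_gcd_ab m (c * k)
  have hgmuL : g • mu ∈ L := by
    have hrw : g • mu = Int.gcdA m (c * k) • lam + Int.gcdB m (c * k) • ((c * k) • mu) := by
      rw [hlm, smul_smul, smul_smul, ← add_smul]
      congr 1
      rw [hbez]; ring
    rw [hrw]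
    exact L.add_mem (L.smul_mem _ hlam.1) (L.smul_mem _ hnuL)
  have hng : (m / g) * g = m := Int.ediv_mul_cancel hgdvdm
  have hlamg : lam = (m / g) • (g • mu) := by
    rw [hlm, smul_smul, hng]
  have hunit : IsUnit (m / g) := hlam.2 _ hgmuL _ hlamg
  have hnpos : 0 < m / g := by
    rcases Int.isUnit_iff.mp hunit with h1 | h1
    · rw [h1]; norm_num
    · exfalso
      have : (-1 : ℤ) * g = m := by rw [← h1, hng]
      nlinarith
  have hn1 : m / g = 1 := by
    rcases Int.isUnit_iff.mp hunit with h1 | h1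
    · exact h1
    · omega
  have hmg : m = g := by rw [← hng, hn1, one_mul]
  have hmdvdck : m ∣ c * k := hmg ▸ hgdvdck
  obtain ⟨s, hs⟩ := hmdvdck
  have hspos : 0 < s := by nlinarith
  -- m = d * k * s
  have hmeq : m = d * k * s := by
    have : m * m = m * (d * k * s) := by
      have : m ^ 2 = (m * s) * k * d := by rw [← hs]; linarith [hint]
      nlinarith
    exact mul_left_cancel₀ hm.ne' this
  have hdkm : d * k ∣ m := ⟨s, hmeq⟩
  -- k * s ∣ 2
  obtain ⟨t, ht⟩ := hmdvd
  have hks2 : k * s ∣ 2 := by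
    refine ⟨t, ?_⟩
    have h3 : d * 2 = d * (k * s * t) := by
      calc d * 2 = 2 * d := by ring
        _ = m * t := ht
        _ = d * k * s * t := by rw [hmeq]
        _ = d * (k * s * t) := by ring
    exact mul_left_cancel₀ hd.ne' h3
  have hkdvd2 : k ∣ 2 := dvd_trans (dvd_mul_right k s) hks2
  have hks : k * s = 1 ∨ k * s = 2 := by
    have h1 : 0 < k * s := mul_pos hk hspos
    have h2 : k * s ≤ 2 := Int.le_of_dvd (by norm_num) hks2
    omega
  refine ⟨hkdvd2, hdkm, ?_, ?_⟩
  · rcases hks with h | h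
    · left; rw [hmeq]; rw [mul_assoc, h, mul_one]
    · right; rw [hmeq]; rw [mul_assoc, h]; ring
  · intro hmd
    have h4 : d * 1 = d * (k * s) := by
      calc d * 1 = m := by rw [mul_one, hmd]
        _ = d * (k * s) := by rw [hmeq]; ring
    have hks1 : (1 : ℤ) = k * s := mul_left_cancel₀ hd.ne' h4
    have hk1 : k ∣ 1 := ⟨s, hks1⟩
    rcases Int.isUnit_iff.mp (isUnit_of_dvd_one hk1) with h | h <;> omega

end RMV
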